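/- arXiv:2504.04069 — 2 statements merged into one kernel-verified Lean document; each statement's English description precedes it below -/
import Mathlib

section
/- Let A ∈ ℝ^{m×n}, let Ḡ ∈ ℝ^{m×k} and H̄ ∈ ℝ^{n×ℓ} be full-column-rank matrices, set A_x = H̄⁺AᵀḠ, A_y = Ḡ⁺AH̄ and M = [[0, A_x],[A_y, 0]], and assume ρ(A_y A_x) > 0 and set λ = −√(ρ(A_y A_x)). Let U be a matrix whose columns form a basis of the ρ(A_y A_x)-eigenspace of A_y A_x, and let V be a matrix with orthonormal columns spanning the column space of the stacked matrix [A_x U/λ ; U]. Then min{‖(VVᵀ − I)z‖ : z ≥ 0, eᵀz = 1} = 0 if and only if there exists a nonzero vector z̄ ∈ ℝ^{ℓ+k} with z̄ ≥ 0 and M z̄ = λ z̄. -/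
open Matrix

/-- Euclidean norm of a vector in `ℝ^n`. -/
noncomputable def vnorm {α : Type*} [Fintype α] (v : α → ℝ) : ℝ := Real.sqrt (v ⬝ᵥ v)

/-- Pseudoinverse of a full-column-rank matrix: `N⁺ = (NᵀN)⁻¹Nᵀ`. -/
noncomputable def pinv {α β : Type*} [Fintype α] [Fintype β] [DecidableEq β]
    (N : Matrix α β ℝ) : Matrix β α ℝ :=
  (Nᵀ * N)⁻¹ * Nᵀ

/-- Spectral radius of a real square matrix: the largest modulus of its (complex)
eigenvalues. -/
noncomputable def specRad {α : Type*} [Fintype α] [DecidableEq α]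
    (C : Matrix α α ℝ) : ℝ :=
  sSup {r : ℝ | ∃ μ : ℂ, μ ∈ spectrum ℂ (C.map Complex.ofReal) ∧ r = ‖μ‖}

lemma vnorm_eq_zero {α : Type*} [Fintype α] {v : α → ℝ} : vnorm v = 0 ↔ v = 0 := by
  unfold vnorm
  rw [show (v ⬝ᵥ v) = ∑ i, v i * v i from rfl]
  constructor
  · intro h
    have hnn : 0 ≤ ∑ i, v i * v i := Finset.sum_nonneg fun i _ => mul_self_nonneg _
    have hle : ∑ i, v i * v i ≤ 0 := Real.sqrt_eq_zero'.mp h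
    have : (v ⬝ᵥ v) = 0 := le_antisymm hle hnn
    exact dotProduct_self_eq_zero.mp this
  · rintro rfl; simp [dotProduct]

lemma vnorm_nonneg {α : Type*} [Fintype α] (v : α → ℝ) : 0 ≤ vnorm v := Real.sqrt_nonneg _

/-- With `A_x = H̄⁺AᵀḠ`, `A_y = Ḡ⁺AH̄`, `M = [[0,A_x],[A_y,0]]`, `ρ(A_y A_x) > 0`,
`λ = −√ρ(A_y A_x)`, `U` a basis of the `ρ(A_y A_x)`-eigenspace of `A_y A_x`, and `V`
an orthonormal basis of the column space of `[A_x U/λ ; U]`: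
`min{‖(VVᵀ − I)z‖ : z ≥ 0, eᵀz = 1} = 0` iff there is a nonzero `z̄ ≥ 0` with
`M z̄ = λ z̄`. -/
theorem stmt13 {m n k l d d' : ℕ} (A : Matrix (Fin m) (Fin n) ℝ)
    (Gb : Matrix (Fin m) (Fin k) ℝ) (Hb : Matrix (Fin n) (Fin l) ℝ)
    (hGrank : Gb.rank = k) (hHrank : Hb.rank = l)
    (hrho : 0 < specRad (pinv Gb * A * Hb * (pinv Hb * Aᵀ * Gb)))
    (lam : ℝ) (hlam : lam = -Real.sqrt (specRad (pinv Gb * A * Hb * (pinv Hb * Aᵀ * Gb))))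
    (U : Matrix (Fin k) (Fin d) ℝ)
    (hUli : LinearIndependent ℝ (fun j : Fin d => fun i => U i j))
    (hUspan : Submodule.span ℝ (Set.range (fun j : Fin d => fun i => U i j)) =
      LinearMap.ker ((pinv Gb * A * Hb * (pinv Hb * Aᵀ * Gb)).mulVecLin -
        specRad (pinv Gb * A * Hb * (pinv Hb * Aᵀ * Gb)) •
          (LinearMap.id : (Fin k → ℝ) →ₗ[ℝ] (Fin k → ℝ))))
    (V : Matrix (Fin l ⊕ Fin k) (Fin d') ℝ)
    (hVo : Vᵀ * V = 1)
    (hVspan : LinearMap.range V.mulVecLin =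
      LinearMap.range (Matrix.fromRows (lam⁻¹ • (pinv Hb * Aᵀ * Gb * U)) U).mulVecLin) :
    sInf {r : ℝ | ∃ z : Fin l ⊕ Fin k → ℝ, (∀ i, 0 ≤ z i) ∧ (∑ i, z i) = 1 ∧
        r = vnorm ((V * Vᵀ - 1).mulVec z)} = 0 ↔
      ∃ zb : Fin l ⊕ Fin k → ℝ, zb ≠ 0 ∧ (∀ i, 0 ≤ zb i) ∧
        (Matrix.fromBlocks 0 (pinv Hb * Aᵀ * Gb) (pinv Gb * A * Hb) 0).mulVec zb =
          lam • zb := by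
  set Ax := pinv Hb * Aᵀ * Gb with hAxdef
  set Ay := pinv Gb * A * Hb with hAydef
  set ρ := specRad (Ay * Ax) with hρdef
  set M := Matrix.fromBlocks (0 : Matrix (Fin l) (Fin l) ℝ) Ax Ay 0 with hMdef
  set W := Matrix.fromRows (lam⁻¹ • (Ax * U)) U with hWdef
  -- k must be positive, else the spectral radius is 0
  have hkne : Nonempty (Fin k) := by
    by_contra hne
    have hE : IsEmpty (Fin k) := not_nonempty_iff.mp hne
    have hsub : Subsingleton (Matrix (Fin k) (Fin k) ℂ) :=
      ⟨fun a b => by ext i j; exact (hE.false i).elim⟩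
    have hz : ρ = 0 := by
      rw [hρdef]
      unfold specRad
      convert Real.sSup_empty using 2
      rw [Set.eq_empty_iff_forall_notMem]
      rintro r ⟨μ, hμ, -⟩
      exact (spectrum.mem_iff.mp hμ) (isUnit_of_subsingleton _)
    rw [hz] at hrho
    exact lt_irrefl _ hrho
  have hNE : Nonempty (Fin l ⊕ Fin k) := ⟨Sum.inr hkne.some⟩
  have hρpos : 0 < ρ := hrho
  have hlam2 : lam ^ 2 = ρ := by
    rw [hlam, neg_pow, Real.sq_sqrt hρpos.le]; ring
  have hlamne : lam ≠ 0 := by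
    rw [hlam, neg_ne_zero]
    exact ne_of_gt (Real.sqrt_pos.mpr hρpos)
  -- characterization of the eigenspace of Ay*Ax via U
  have hUchar : ∀ y : Fin k → ℝ,
      ((Ay * Ax).mulVec y = ρ • y ↔ ∃ c : Fin d → ℝ, U.mulVec c = y) := by
    intro y
    have h1 : y ∈ LinearMap.ker ((Ay * Ax).mulVecLin -
        ρ • (LinearMap.id : (Fin k → ℝ) →ₗ[ℝ] (Fin k → ℝ))) ↔
        (Ay * Ax).mulVec y = ρ • y := by
      rw [LinearMap.mem_ker, LinearMap.sub_apply, LinearMap.smul_apply, LinearMap.id_apply,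
        sub_eq_zero, mulVecLin_apply]
    have h2 : ∀ c : Fin d → ℝ, (∑ j, c j • (fun i => U i j)) = U.mulVec c := by
      intro c; ext i
      simp [Matrix.mulVec, dotProduct, Finset.sum_apply, mul_comm]
    rw [← h1, ← hUspan, Submodule.mem_span_range_iff_exists_fun]
    constructor
    · rintro ⟨c, hc⟩; exact ⟨c, by rw [← h2 c]; exact hc⟩
    · rintro ⟨c, hc⟩; exact ⟨c, by rw [h2 c]; exact hc⟩
  -- eigenvectors of M for lam = range of W
  have hWchar : ∀ z : Fin l ⊕ Fin k → ℝ,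
      (∃ c, W.mulVec c = z) ↔ M.mulVec z = lam • z := by
    intro z
    constructor
    · rintro ⟨c, rfl⟩
      rw [hWdef, fromRows_mulVec]
      set y := U.mulVec c with hy
      have hyeig : (Ay * Ax).mulVec y = ρ • y := (hUchar y).mpr ⟨c, rfl⟩
      have hx : (lam⁻¹ • (Ax * U)).mulVec c = lam⁻¹ • Ax.mulVec y := by
        rw [smul_mulVec, ← mulVec_mulVec]
      rw [hx, hMdef, fromBlocks_mulVec]
      simp only [Sum.elim_comp_inl, Sum.elim_comp_inr, zero_mulVec, zero_add, add_zero]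
      have hc1 : Ax.mulVec y = lam • lam⁻¹ • Ax.mulVec y := by
        rw [smul_smul, mul_inv_cancel₀ hlamne, one_smul]
      have hc2 : Ay.mulVec (lam⁻¹ • Ax.mulVec y) = lam • y := by
        rw [mulVec_smul, mulVec_mulVec, hyeig, smul_smul, ← hlam2]
        congr 1
        field_simp
      ext i
      cases i with
      | inl i =>
        simp only [Sum.elim_inl, Pi.smul_apply]
        exact congrFun hc1 i
      | inr i =>
        simp only [Sum.elim_inr, Pi.smul_apply]
        exact congrFun hc2 i
    · intro hz
      set x := z ∘ Sum.inl with hxdef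
      set y := z ∘ Sum.inr with hydef
      rw [hMdef, fromBlocks_mulVec] at hz
      have h1 : Ax.mulVec y = lam • x := by
        ext i
        have := congrFun hz (Sum.inl i)
        simpa [hxdef, hydef] using this
      have h2 : Ay.mulVec x = lam • y := by
        ext i
        have := congrFun hz (Sum.inr i)
        simpa [hxdef, hydef] using this
      have hyeig : (Ay * Ax).mulVec y = ρ • y := by
        rw [← mulVec_mulVec, h1, mulVec_smul, h2, smul_smul, ← hlam2]; ring_nf
      obtain ⟨c, hc⟩ := (hUchar y).mp hyeig
      refine ⟨c, ?_⟩
      rw [hWdef, fromRows_mulVec, smul_mulVec, ← mulVec_mulVec, hc, h1, smul_smul,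
        inv_mul_cancel₀ hlamne, one_smul]
      exact Sum.elim_comp_inl_inr z
  -- (V Vᵀ - 1) z = 0 iff z is an eigenvector
  have hzero : ∀ z : Fin l ⊕ Fin k → ℝ,
      ((V * Vᵀ - 1).mulVec z = 0 ↔ M.mulVec z = lam • z) := by
    intro z
    rw [← hWchar z]
    constructor
    · intro h
      have h' : (V * Vᵀ).mulVec z = z := by
        have := sub_eq_zero.mp (by rwa [sub_mulVec, Matrix.one_mulVec] at h)
        exact this
      have : z ∈ LinearMap.range W.mulVecLin := by
        rw [← hVspan]
        exact ⟨Vᵀ.mulVec z, by rw [mulVecLin_apply, mulVec_mulVec]; exact h'⟩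
      obtain ⟨c, hc⟩ := this
      exact ⟨c, hc⟩
    · rintro ⟨c, rfl⟩
      have : W.mulVec c ∈ LinearMap.range V.mulVecLin := by
        rw [hVspan]; exact ⟨c, rfl⟩
      obtain ⟨e, he⟩ := this
      rw [mulVecLin_apply] at he
      rw [← he, sub_mulVec, Matrix.one_mulVec, mulVec_mulVec, Matrix.mul_assoc, hVo, Matrix.mul_one,
        sub_self]
  -- the feasible set is the image of the standard simplex
  set f : (Fin l ⊕ Fin k → ℝ) → ℝ := fun z => vnorm ((V * Vᵀ - 1).mulVec z) with hfdef
  set S := {r : ℝ | ∃ z : Fin l ⊕ Fin k → ℝ, (∀ i, 0 ≤ z i) ∧ (∑ i, z i) = 1 ∧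
      r = vnorm ((V * Vᵀ - 1).mulVec z)} with hSdef
  have hSim : S = f '' stdSimplex ℝ (Fin l ⊕ Fin k) := by
    ext r
    simp only [hSdef, Set.mem_setOf_eq, Set.mem_image, stdSimplex, Set.mem_setOf_eq]
    constructor
    · rintro ⟨z, h1, h2, h3⟩; exact ⟨z, ⟨h1, h2⟩, h3.symm⟩
    · rintro ⟨z, ⟨h1, h2⟩, h3⟩; exact ⟨z, h1, h2, h3.symm⟩
  have hfc : Continuous f := by
    have hw : Continuous fun z : Fin l ⊕ Fin k → ℝ => (V * Vᵀ - 1).mulVec z := by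
      have := (V * Vᵀ - 1).mulVecLin.continuous_of_finiteDimensional
      exact this
    have hdp : Continuous fun z : Fin l ⊕ Fin k → ℝ =>
        ((V * Vᵀ - 1).mulVec z) ⬝ᵥ ((V * Vᵀ - 1).mulVec z) := by
      simp only [dotProduct]
      exact continuous_finset_sum _ fun i _ =>
        ((continuous_apply i).comp hw).mul ((continuous_apply i).comp hw)
    exact Real.continuous_sqrt.comp hdp
  have hScomp : IsCompact S := by
    rw [hSim]; exact (isCompact_stdSimplex _ _).image hfc
  have hSne : S.Nonempty := by
    refine ⟨f (fun _ => (Fintype.card (Fin l ⊕ Fin k) : ℝ)⁻¹),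
      (fun _ => (Fintype.card (Fin l ⊕ Fin k) : ℝ)⁻¹), fun i => ?_, ?_, rfl⟩
    · positivity
    · rw [Finset.sum_const, Finset.card_univ, nsmul_eq_mul]
      exact mul_inv_cancel₀ (Nat.cast_ne_zero.mpr Fintype.card_ne_zero)
  have hSnn : ∀ r ∈ S, (0:ℝ) ≤ r := by
    rintro r ⟨z, -, -, rfl⟩; exact vnorm_nonneg _
  constructor
  · intro h
    have h0 : (0:ℝ) ∈ S := by
      have := hScomp.sInf_mem hSne
      rwa [h] at this
    obtain ⟨z, hz1, hz2, hz3⟩ := h0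
    have hzv : (V * Vᵀ - 1).mulVec z = 0 := vnorm_eq_zero.mp hz3.symm
    refine ⟨z, ?_, hz1, (hzero z).mp hzv⟩
    intro hz0
    rw [hz0] at hz2
    simp at hz2
  · rintro ⟨zb, hzb0, hzbn, hzbe⟩
    have hspos : 0 < ∑ i, zb i := by
      obtain ⟨i, hi⟩ := Function.ne_iff.mp hzb0
      exact Finset.sum_pos' (fun j _ => hzbn j)
        ⟨i, Finset.mem_univ i, lt_of_le_of_ne (hzbn i) (Ne.symm hi)⟩
    set s := ∑ i, zb i with hs
    set z := s⁻¹ • zb with hzdef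
    have hzeig : M.mulVec z = lam • z := by
      rw [hzdef, mulVec_smul, hzbe, smul_comm]
    have h0 : (0:ℝ) ∈ S := by
      refine ⟨z, fun i => ?_, ?_, ?_⟩
      · exact mul_nonneg (inv_nonneg.mpr hspos.le) (hzbn i)
      · rw [hzdef]
        simp only [Pi.smul_apply, smul_eq_mul, ← Finset.mul_sum]
        exact inv_mul_cancel₀ (ne_of_gt hspos)
      · rw [(hzero z).mpr hzeig]
        symm
        exact vnorm_eq_zero.mpr rfl
    refine le_antisymm (csInf_le ⟨0, hSnn⟩ h0) (le_csInf hSne hSnn)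
end

section
/- Let A ∈ ℝ^{m×n}, let Ḡ ∈ ℝ^{m×k} and H̄ ∈ ℝ^{n×ℓ} be full-column-rank matrices whose columns are unit vectors, generating the polyhedral cones P = {Ḡx : x ≥ 0} ⊆ ℝ^m and contained in Q ⊇ {H̄y : y ≥ 0}; set A_x = H̄⁺AᵀḠ, A_y = Ḡ⁺AH̄, M = [[0, A_x],[A_y, 0]], and λ = −√(ρ(A_y A_x)) with λ ≠ 0. If z̄ = (ȳᵀ, x̄ᵀ)ᵀ ≥ 0 is a nonzero vector with M z̄ = λ z̄, where x̄ ∈ ℝ^k and ȳ ∈ ℝ^ℓ, then x̄ ≠ 0, ȳ ≠ 0, ‖Ḡ x̄‖ = ‖H̄ ȳ‖, and the vectors u = Ḡx̄/‖Ḡx̄‖ and v = H̄ȳ/‖H̄ȳ‖ satisfy u ∈ {Ḡx : x ≥ 0}, v ∈ {H̄y : y ≥ 0}, ‖u‖ = ‖v‖ = 1 and ⟨u, Av⟩ = λ. -/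
open Matrix

/-- The polyhedral cone generated by the columns of `G`. -/
def coneOf {m p : ℕ} (G : Matrix (Fin m) (Fin p) ℝ) : Set (Fin m → ℝ) :=
  {u | ∃ x : Fin p → ℝ, (∀ i, 0 ≤ x i) ∧ u = G.mulVec x}

lemma aux_isUnit {k : ℕ} (M : Matrix (Fin k) (Fin k) ℝ) (h : M.rank = k) : IsUnit M.det := by
  rw [isUnit_iff_ne_zero]
  intro h0
  obtain ⟨v, hv0, hv⟩ := (Matrix.exists_mulVec_eq_zero_iff).mpr h0
  have hr : LinearMap.range M.mulVecLin = ⊤ := by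
    apply Submodule.eq_top_of_finrank_eq
    rw [← Matrix.rank, h]
    simp [Module.finrank_pi]
  have hsurj : Function.Surjective M.mulVecLin := LinearMap.range_eq_top.mp hr
  have hinj : Function.Injective M.mulVecLin :=
    (LinearMap.injective_iff_surjective).mpr hsurj
  exact hv0 (by simpa using hinj (a₁ := v) (a₂ := 0) (by simpa [Matrix.mulVecLin] using hv))

lemma dp_aux {a b : ℕ} (G : Matrix (Fin a) (Fin b) ℝ) (x : Fin b → ℝ) (w : Fin a → ℝ) :
    (G.mulVec x) ⬝ᵥ w = x ⬝ᵥ (Gᵀ.mulVec w) := by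
  rw [dotProduct_comm, dotProduct_mulVec, ← Matrix.mulVec_transpose, dotProduct_comm]

/-- If `z̄ = (ȳᵀ, x̄ᵀ)ᵀ ≥ 0` is a nonzero eigenvector of `M = [[0,A_x],[A_y,0]]` for the
eigenvalue `λ = −√ρ(A_y A_x) ≠ 0`, then `x̄ ≠ 0`, `ȳ ≠ 0`, `‖Ḡx̄‖ = ‖H̄ȳ‖`, and the
normalized vectors `u = Ḡx̄/‖Ḡx̄‖`, `v = H̄ȳ/‖H̄ȳ‖` form a feasible pair of `SV(A,P,Q)`
with `⟨u, Av⟩ = λ`. -/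
theorem stmt14 {m n k l : ℕ} (A : Matrix (Fin m) (Fin n) ℝ)
    (Gb : Matrix (Fin m) (Fin k) ℝ) (Hb : Matrix (Fin n) (Fin l) ℝ)
    (hGcols : ∀ j, vnorm (fun i => Gb i j) = 1) (hHcols : ∀ j, vnorm (fun i => Hb i j) = 1)
    (hGrank : Gb.rank = k) (hHrank : Hb.rank = l)
    (lam : ℝ) (hlam : lam = -Real.sqrt (specRad (pinv Gb * A * Hb * (pinv Hb * Aᵀ * Gb))))
    (hlamne : lam ≠ 0)
    (xb : Fin k → ℝ) (yb : Fin l → ℝ)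
    (hnn : ∀ i, 0 ≤ Sum.elim yb xb i)
    (hnz : Sum.elim yb xb ≠ 0)
    (heig : (Matrix.fromBlocks 0 (pinv Hb * Aᵀ * Gb) (pinv Gb * A * Hb) 0).mulVec
        (Sum.elim yb xb) = lam • Sum.elim yb xb) :
    xb ≠ 0 ∧ yb ≠ 0 ∧
    vnorm (Gb.mulVec xb) = vnorm (Hb.mulVec yb) ∧
    ((vnorm (Gb.mulVec xb))⁻¹ • Gb.mulVec xb) ∈ coneOf Gb ∧
    ((vnorm (Hb.mulVec yb))⁻¹ • Hb.mulVec yb) ∈ coneOf Hb ∧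
    vnorm ((vnorm (Gb.mulVec xb))⁻¹ • Gb.mulVec xb) = 1 ∧
    vnorm ((vnorm (Hb.mulVec yb))⁻¹ • Hb.mulVec yb) = 1 ∧
    ((vnorm (Gb.mulVec xb))⁻¹ • Gb.mulVec xb) ⬝ᵥ
        A.mulVec ((vnorm (Hb.mulVec yb))⁻¹ • Hb.mulVec yb) = lam := by
  have hdG : IsUnit (Gbᵀ * Gb).det :=
    aux_isUnit _ (by rw [Matrix.rank_transpose_mul_self, hGrank])
  have hdH : IsUnit (Hbᵀ * Hb).det :=
    aux_isUnit _ (by rw [Matrix.rank_transpose_mul_self, hHrank])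
  have hpG : pinv Gb * Gb = 1 := by
    rw [pinv, Matrix.mul_assoc, Matrix.nonsing_inv_mul _ hdG]
  have hpH : pinv Hb * Hb = 1 := by
    rw [pinv, Matrix.mul_assoc, Matrix.nonsing_inv_mul _ hdH]
  -- eigen equations
  rw [Matrix.fromBlocks_mulVec] at heig
  have hx : (pinv Gb * A * Hb).mulVec yb = lam • xb := by
    funext i
    have := congrFun heig (Sum.inr i)
    simpa using this
  have hy : (pinv Hb * Aᵀ * Gb).mulVec xb = lam • yb := by
    funext i
    have := congrFun heig (Sum.inl i)
    simpa using this
  have hxb : xb ≠ 0 := by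
    intro h0
    have hyb : yb = 0 := by
      have : lam • yb = 0 := by rw [← hy, h0, Matrix.mulVec_zero]
      simpa [hlamne] using this
    apply hnz
    funext i
    cases i <;> simp [h0, hyb]
  have hyb : yb ≠ 0 := by
    intro h0
    have hxb' : xb = 0 := by
      have : lam • xb = 0 := by rw [← hx, h0, Matrix.mulVec_zero]
      simpa [hlamne] using this
    exact hxb hxb'
  -- key identities
  have hGG : (Gbᵀ * Gb) * (pinv Gb * A * Hb) = Gbᵀ * A * Hb := by
    rw [pinv, ← Matrix.mul_assoc, ← Matrix.mul_assoc, ← Matrix.mul_assoc,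
      Matrix.mul_nonsing_inv _ hdG, Matrix.one_mul]
  have hHH : (Hbᵀ * Hb) * (pinv Hb * Aᵀ * Gb) = Hbᵀ * Aᵀ * Gb := by
    rw [pinv, ← Matrix.mul_assoc, ← Matrix.mul_assoc, ← Matrix.mul_assoc,
      Matrix.mul_nonsing_inv _ hdH, Matrix.one_mul]
  set gx := Gb.mulVec xb with hgx
  set hyv := Hb.mulVec yb with hhyv
  set a := gx ⬝ᵥ gx with ha
  set b := hyv ⬝ᵥ hyv with hb
  have key1 : gx ⬝ᵥ A.mulVec hyv = lam * a := by
    have h1 : Gbᵀ.mulVec (A.mulVec hyv) = lam • (Gbᵀ * Gb).mulVec xb := by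
      have h2 := congrArg (fun w => (Gbᵀ * Gb).mulVec w) hx
      simp only [Matrix.mulVec_mulVec, hGG, Matrix.mulVec_smul] at h2
      rw [hhyv]
      simpa only [Matrix.mulVec_mulVec, Matrix.mul_assoc] using h2
    rw [dp_aux, h1, dotProduct_smul, smul_eq_mul]
    congr 1
    rw [← Matrix.mulVec_mulVec, ← dp_aux, ← hgx]
  have key2 : hyv ⬝ᵥ Aᵀ.mulVec gx = lam * b := by
    have h1 : Hbᵀ.mulVec (Aᵀ.mulVec gx) = lam • (Hbᵀ * Hb).mulVec yb := by
      have h2 := congrArg (fun w => (Hbᵀ * Hb).mulVec w) hy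
      simp only [Matrix.mulVec_mulVec, hHH, Matrix.mulVec_smul] at h2
      rw [hgx]
      simpa only [Matrix.mulVec_mulVec, Matrix.mul_assoc] using h2
    rw [dp_aux, h1, dotProduct_smul, smul_eq_mul]
    congr 1
    rw [← Matrix.mulVec_mulVec, ← dp_aux, ← hhyv]
  have hsym : gx ⬝ᵥ A.mulVec hyv = hyv ⬝ᵥ Aᵀ.mulVec gx := by
    rw [dotProduct_comm, dp_aux]
  have hab : a = b := by
    have : lam * a = lam * b := by rw [← key1, hsym, key2]
    exact mul_left_cancel₀ hlamne this
  -- nonvanishing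
  have hgx0 : gx ≠ 0 := by
    intro h0
    apply hxb
    have := congrArg (fun w => (pinv Gb).mulVec w) h0
    simpa [hgx, Matrix.mulVec_mulVec, hpG] using this
  have ha0 : 0 ≤ a := Finset.sum_nonneg fun i _ => mul_self_nonneg _
  have hane : a ≠ 0 := fun h => hgx0 ((dotProduct_self_eq_zero).mp h)
  have hapos : 0 < a := lt_of_le_of_ne ha0 (Ne.symm hane)
  have hsq : Real.sqrt a ≠ 0 := by positivity
  have hvn : vnorm gx = Real.sqrt a := rfl
  have hvn2 : vnorm hyv = Real.sqrt a := by rw [vnorm, ← hb, ← hab]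
  set c := (Real.sqrt a)⁻¹ with hc
  have hc1 : c * Real.sqrt a = 1 := inv_mul_cancel₀ hsq
  have hca : c * (c * a) = 1 := by
    rw [← Real.sq_sqrt ha0]
    rw [hc]; field_simp
  have hcnn : 0 ≤ c := by positivity
  refine ⟨hxb, hyb, ?_, ?_, ?_, ?_, ?_, ?_⟩
  · rw [hvn, hvn2]
  · exact ⟨c • xb, fun i => mul_nonneg hcnn (hnn (Sum.inr i)),
      by rw [hvn, ← hc, Matrix.mulVec_smul]⟩
  · exact ⟨c • yb, fun i => mul_nonneg hcnn (hnn (Sum.inl i)),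
      by rw [hvn2, ← hc, Matrix.mulVec_smul]⟩
  · rw [hvn, ← hc, vnorm, smul_dotProduct, dotProduct_smul, smul_eq_mul, smul_eq_mul, ← ha, hca,
      Real.sqrt_one]
  · rw [hvn2, ← hc, vnorm, smul_dotProduct, dotProduct_smul, smul_eq_mul, smul_eq_mul, ← hb,
      ← hab, hca, Real.sqrt_one]
  · rw [hvn, hvn2, ← hc, Matrix.mulVec_smul, smul_dotProduct, dotProduct_smul, smul_eq_mul,
      smul_eq_mul, key1]
    calc c * (c * (lam * a)) = lam * (c * (c * a)) := by ring
    _ = lam := by rw [hca, mul_one]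
end
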